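/- Let n ≥ 2, let D ⊂ ℝⁿ be a bounded measurable set, and let f : ℝⁿ → ℂ be integrable and vanish almost everywhere outside D. Suppose that for all z₁, z₂ ∈ ℂⁿ with z₁ · z₁ = 0 and z₂ · z₂ = 0 one has ∫_D f(x) exp((z₁ + z₂) · x) dx = 0. Then f = 0 almost everywhere. (In particular, the pair {∇², ∇²} has property C: products of harmonic exponentials are total in L²(D).) -/

import Mathlib

open MeasureTheory Real FourierTransform
open scoped InnerProductSpace ContDiff

/-- A smooth compactly supported function is a Schwartz map. -/
noncomputable def mySchwartzOfCompactSupport {V : Type*} [NormedAddCommGroup V]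
    [NormedSpace ℝ V] (g : V → ℂ) (hg : ContDiff ℝ ∞ g) (hsupp : HasCompactSupport g) :
    SchwartzMap V ℂ where
  toFun := g
  smooth' := hg
  decay' := by
    intro k m
    have hc : Continuous fun x => ‖x‖ ^ k * ‖iteratedFDeriv ℝ m g x‖ :=
      (continuous_norm.pow k).mul
        ((hg.continuous_iteratedFDeriv (by exact_mod_cast le_top)).norm)
    have hcs : HasCompactSupport fun x => ‖x‖ ^ k * ‖iteratedFDeriv ℝ m g x‖ := by
      have h1 : HasCompactSupport (iteratedFDeriv ℝ m g) := hsupp.iteratedFDeriv m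
      have h2 : HasCompactSupport fun x => ‖iteratedFDeriv ℝ m g x‖ :=
        h1.comp_left (g := norm) norm_zero
      exact h2.mul_left
    obtain ⟨C, hC⟩ := hcs.exists_bound_of_continuous hc
    exact ⟨C, fun x => by
      have := hC x
      rwa [Real.norm_eq_abs, abs_of_nonneg (by positivity)] at this⟩

/-- In dimension ≥ 2, every vector admits an orthogonal vector of the same norm. -/
lemma my_exists_orthogonal {n : ℕ} (hn : 2 ≤ n) (v : EuclideanSpace ℝ (Fin n)) :
    ∃ u : EuclideanSpace ℝ (Fin n), ⟪u, v⟫_ℝ = 0 ∧ ⟪u, u⟫_ℝ = ⟪v, v⟫_ℝ := by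
  by_cases hv : v = 0
  · exact ⟨0, by simp [hv]⟩
  · have hfin : 0 < Module.finrank ℝ ((ℝ ∙ v)ᗮ : Submodule ℝ (EuclideanSpace ℝ (Fin n))) := by
      have h1 : Module.finrank ℝ (ℝ ∙ v : Submodule ℝ (EuclideanSpace ℝ (Fin n))) = 1 :=
        finrank_span_singleton hv
      have h2 := Submodule.finrank_add_finrank_orthogonal (K := (ℝ ∙ v))
      have h3 : Module.finrank ℝ (EuclideanSpace ℝ (Fin n)) = n := finrank_euclideanSpace_fin
      omega
    have hne : ((ℝ ∙ v)ᗮ : Submodule ℝ (EuclideanSpace ℝ (Fin n))) ≠ ⊥ := by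
      intro hbot
      rw [hbot] at hfin
      simp at hfin
    obtain ⟨u₀, hu₀mem, hu₀⟩ := Submodule.exists_mem_ne_zero_of_ne_bot hne
    refine ⟨(‖v‖ / ‖u₀‖) • u₀, ?_, ?_⟩
    · have h : ⟪u₀, v⟫_ℝ = 0 := by
        have := (Submodule.mem_orthogonal (ℝ ∙ v) u₀).1 hu₀mem v
          (Submodule.mem_span_singleton_self v)
        rwa [real_inner_comm]
      rw [real_inner_smul_left, h, mul_zero]
    · rw [real_inner_smul_left, real_inner_smul_right, real_inner_self_eq_norm_sq,
        real_inner_self_eq_norm_sq]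
      have hu₀n : ‖u₀‖ ≠ 0 := norm_ne_zero_iff.2 hu₀
      field_simp

/-- If `∑ b² = ∑ a²` and `∑ ba = 0` then `(i a + b)/2` is a null vector. -/
lemma my_null_sum {n : ℕ} (a b : Fin n → ℝ)
    (h1 : (∑ k, (b k : ℂ) * (b k : ℂ)) = ∑ k, (a k : ℂ) * (a k : ℂ))
    (h2 : (∑ k, (b k : ℂ) * (a k : ℂ)) = 0) :
    (∑ k, ((Complex.I * (a k : ℂ) + (b k : ℂ)) / 2) *
      ((Complex.I * (a k : ℂ) + (b k : ℂ)) / 2)) = 0 := by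
  have hterm : ∀ k ∈ Finset.univ, ((Complex.I * (a k : ℂ) + (b k : ℂ)) / 2) *
      ((Complex.I * (a k : ℂ) + (b k : ℂ)) / 2)
      = (1/4 : ℂ) * ((b k : ℂ) * (b k : ℂ)) - (1/4 : ℂ) * ((a k : ℂ) * (a k : ℂ))
        + (Complex.I / 2) * ((b k : ℂ) * (a k : ℂ)) := by
    intro k _
    linear_combination ((a k : ℂ) * (a k : ℂ)) / 4 * Complex.I_mul_I
  rw [Finset.sum_congr rfl hterm, Finset.sum_add_distrib, Finset.sum_sub_distrib,
    ← Finset.mul_sum, ← Finset.mul_sum, ← Finset.mul_sum, h1, h2]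
  ring

/-- property C for the pair `{∇², ∇²}`: if an integrable function
supported in a bounded set `D ⊂ ℝⁿ` is orthogonal to all products of harmonic
exponentials `exp(z₁·x) exp(z₂·x)` with `z₁·z₁ = z₂·z₂ = 0`, then `f = 0` a.e. -/
theorem property_C_laplacian
    (n : ℕ) (hn : 2 ≤ n)
    (D : Set (EuclideanSpace ℝ (Fin n)))
    (hD : Bornology.IsBounded D) (hDm : MeasurableSet D)
    (f : EuclideanSpace ℝ (Fin n) → ℂ)
    (hf : Integrable f)
    (hsupp : ∀ᵐ x : EuclideanSpace ℝ (Fin n), x ∉ D → f x = 0)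
    (horth : ∀ z₁ z₂ : Fin n → ℂ,
      (∑ k, z₁ k * z₁ k) = 0 → (∑ k, z₂ k * z₂ k) = 0 →
      ∫ x in D, f x * Complex.exp (∑ k, (z₁ k + z₂ k) * (x k : ℂ)) = 0) :
    f =ᵐ[volume] 0 := by
  classical
  -- Step 1: the Fourier transform of `f` vanishes identically.
  have key : ∀ ξ : EuclideanSpace ℝ (Fin n), 𝓕 f ξ = 0 := by
    intro ξ
    set w : EuclideanSpace ℝ (Fin n) := (-(2 * π)) • ξ with hw
    obtain ⟨u, huw, huu⟩ := my_exists_orthogonal hn w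
    set z₁ : Fin n → ℂ := fun k => (Complex.I * (w k : ℂ) + (u k : ℂ)) / 2 with hz₁
    set z₂ : Fin n → ℂ := fun k => (Complex.I * (w k : ℂ) + ((-u) k : ℂ)) / 2 with hz₂
    have hsum_uu : (∑ k, (u k : ℂ) * (u k : ℂ)) = ∑ k, (w k : ℂ) * (w k : ℂ) := by
      have h0 : (⟪u, u⟫_ℝ : ℂ) = (⟪w, w⟫_ℝ : ℂ) := by rw [huu]
      rw [PiLp.inner_apply, PiLp.inner_apply] at h0
      simp only [RCLike.inner_apply, conj_trivial] at h0
      push_cast at h0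
      simpa using h0
    have hsum_uw : (∑ k, (u k : ℂ) * (w k : ℂ)) = 0 := by
      have h0 : (⟪u, w⟫_ℝ : ℂ) = 0 := by rw [huw]; simp
      rw [PiLp.inner_apply] at h0
      simp only [RCLike.inner_apply, conj_trivial] at h0
      push_cast at h0
      simpa [mul_comm] using h0
    have hnull₁ : (∑ k, z₁ k * z₁ k) = 0 := my_null_sum w u hsum_uu hsum_uw
    have hnull₂ : (∑ k, z₂ k * z₂ k) = 0 := by
      refine my_null_sum w (-u) ?_ ?_
      · have : ∀ k ∈ Finset.univ, (((-u) k : ℝ) : ℂ) * (((-u) k : ℝ) : ℂ)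
            = (u k : ℂ) * (u k : ℂ) := by
          intro k _
          have : (-u) k = -(u k) := rfl
          rw [this]; push_cast; ring
        exact (Finset.sum_congr rfl this).trans hsum_uu
      · have h5 : ∀ k ∈ Finset.univ, (((-u) k : ℝ) : ℂ) * ((w k : ℝ) : ℂ)
            = -((u k : ℂ) * (w k : ℂ)) := by
          intro k _
          have : (-u) k = -(u k) := rfl
          rw [this]; push_cast; ring
        exact (Finset.sum_congr rfl h5).trans (by rw [Finset.sum_neg_distrib, hsum_uw, neg_zero])
    have horth' := horth z₁ z₂ hnull₁ hnull₂
    have hzsum : ∀ x : EuclideanSpace ℝ (Fin n), (∑ k, (z₁ k + z₂ k) * (x k : ℂ))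
        = ((-2 * π * ⟪x, ξ⟫_ℝ : ℝ) : ℂ) * Complex.I := by
      intro x
      have h1 : ∀ k, z₁ k + z₂ k = Complex.I * (w k : ℂ) := by
        intro k
        simp only [hz₁, hz₂]
        have : (-u) k = -(u k) := rfl
        rw [this]
        push_cast
        ring
      simp only [h1]
      have h2 : (∑ k, Complex.I * (w k : ℂ) * (x k : ℂ))
          = Complex.I * ∑ k, (w k : ℂ) * (x k : ℂ) := by
        rw [Finset.mul_sum]
        exact Finset.sum_congr rfl fun k _ => by ring
      rw [h2]
      have h3 : (∑ k, (w k : ℂ) * (x k : ℂ)) = ((⟪w, x⟫_ℝ : ℝ) : ℂ) := by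
        rw [PiLp.inner_apply]
        simp only [RCLike.inner_apply, conj_trivial]
        push_cast
        exact Finset.sum_congr rfl fun k _ => mul_comm _ _
      rw [h3]
      have h4 : ⟪w, x⟫_ℝ = -2 * π * ⟪x, ξ⟫_ℝ := by
        rw [hw, real_inner_smul_left, real_inner_comm]
        ring
      rw [h4]
      ring
    rw [Real.fourier_eq']
    have hint : ∀ x : EuclideanSpace ℝ (Fin n),
        Complex.exp (((-2 * π * ⟪x, ξ⟫_ℝ : ℝ) : ℂ) * Complex.I) • f x
        = f x * Complex.exp (∑ k, (z₁ k + z₂ k) * (x k : ℂ)) := by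
      intro x
      rw [hzsum x, smul_eq_mul, mul_comm]
    calc ∫ x, Complex.exp (((-2 * π * ⟪x, ξ⟫_ℝ : ℝ) : ℂ) * Complex.I) • f x
        = ∫ x, f x * Complex.exp (∑ k, (z₁ k + z₂ k) * (x k : ℂ)) :=
          integral_congr_ae (Filter.Eventually.of_forall hint)
      _ = ∫ x in D, f x * Complex.exp (∑ k, (z₁ k + z₂ k) * (x k : ℂ)) := by
          refine (setIntegral_eq_integral_of_ae_compl_eq_zero ?_).symm
          filter_upwards [hsupp] with x hx hxD
          rw [hx hxD, zero_mul]
      _ = 0 := horth'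
  -- Step 2: a function with vanishing Fourier transform is a.e. zero.
  apply ae_eq_zero_of_integral_contDiff_smul_eq_zero hf.locallyIntegrable
  intro g hg hgc
  have hgc' : ContDiff ℝ ∞ (fun x : EuclideanSpace ℝ (Fin n) => (g x : ℂ)) :=
    Complex.ofRealCLM.contDiff.comp hg
  have hgcs : HasCompactSupport (fun x : EuclideanSpace ℝ (Fin n) => (g x : ℂ)) :=
    hgc.comp_left (g := Complex.ofReal) Complex.ofReal_zero
  set G : SchwartzMap (EuclideanSpace ℝ (Fin n)) ℂ :=
    mySchwartzOfCompactSupport _ hgc' hgcs with hG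
  set h : SchwartzMap (EuclideanSpace ℝ (Fin n)) ℂ :=
    (SchwartzMap.fourierTransformCLE ℂ (SchwartzMap (EuclideanSpace ℝ (Fin n)) ℂ)).symm G with hh
  have hFh : 𝓕 (⇑h) = ⇑G := by
    have h6 := (SchwartzMap.fourierTransformCLE ℂ (SchwartzMap (EuclideanSpace ℝ (Fin n)) ℂ)).apply_symm_apply G
    rw [← h6]
    rfl
  have flip_eq : (innerₗ (EuclideanSpace ℝ (Fin n))).flip = innerₗ (EuclideanSpace ℝ (Fin n)) := by
    apply LinearMap.ext; intro x; apply LinearMap.ext; intro y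
    exact real_inner_comm x y
  have mult := VectorFourier.integral_fourierIntegral_smul_eq_flip
    (e := Real.fourierChar) (L := innerₗ (EuclideanSpace ℝ (Fin n)))
    (μ := (volume : Measure (EuclideanSpace ℝ (Fin n))))
    (ν := (volume : Measure (EuclideanSpace ℝ (Fin n)))) Real.continuous_fourierChar
    (by exact continuous_inner) hf h.integrable
  rw [flip_eq] at mult
  have hzero : ∀ ξ : EuclideanSpace ℝ (Fin n),
      (VectorFourier.fourierIntegral Real.fourierChar volume
        (innerₗ (EuclideanSpace ℝ (Fin n))) f ξ) • h ξ = 0 := by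
    intro ξ
    have h7 : VectorFourier.fourierIntegral Real.fourierChar volume
        (innerₗ (EuclideanSpace ℝ (Fin n))) f ξ = 𝓕 f ξ := rfl
    rw [h7, key ξ, zero_smul]
  rw [integral_congr_ae (Filter.Eventually.of_forall hzero), integral_zero] at mult
  have hR : ∀ x : EuclideanSpace ℝ (Fin n),
      f x • (VectorFourier.fourierIntegral Real.fourierChar volume
        (innerₗ (EuclideanSpace ℝ (Fin n))) (⇑h) x) = g x • f x := by
    intro x
    have h1 : VectorFourier.fourierIntegral Real.fourierChar volume
        (innerₗ (EuclideanSpace ℝ (Fin n))) (⇑h) x = 𝓕 (⇑h) x := rfl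
    rw [h1, hFh]
    have h2 : G x = (g x : ℂ) := rfl
    rw [h2, smul_eq_mul, Complex.real_smul, mul_comm]
  rw [← integral_congr_ae (Filter.Eventually.of_forall hR)]
  exact mult.symm
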